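/- Let K be a field and let H11 (n1×m1), H12 (n1×m2), H21 (n2×m1), H22 (n2×m2) be matrices over K satisfying rank([H11 | H12]) = n1, rank([H21 | H22]) = n2, rank([H11; H21]) = m1, and rank([H12; H22]) = m2. Let B = [[H11, H12],[H21, 0]] and C = [[H21, H22],[0, H12]]. If R1, R2 are nonnegative real numbers with R1 ≤ rank(H11), R2 ≤ min(n1, n2) − rank(H21), and R1 + R2 ≤ n1, then all of the following hold: R1 ≤ rank(H11); R2 ≤ rank(H22); R1+R2 ≤ n1+m2−rank(H12); R1+R2 ≤ n2+m1−rank(H21); R1+R2 ≤ rank(B)+rank(C)−rank(H12)−rank(H21); 2R1+R2 ≤ n1+m1+rank(C)−rank(H12)−rank(H21); and R1+2R2 ≤ n2+m2+rank(B)−rank(H12)−rank(H21). -/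

import Mathlib

open Matrix Module

section Aux

variable {K : Type*} [Field K] {n m n' m' : Type*} [Fintype n] [Fintype m]
  [Fintype n'] [Fintype m']

lemma rank_le_fromColumns_left (A : Matrix n m K) (B : Matrix n m' K) :
    A.rank ≤ (fromCols A B).rank := by
  apply Submodule.finrank_mono
  rintro _ ⟨x, rfl⟩
  exact ⟨Sum.elim x 0, by simp⟩

lemma rank_fromColumns_le (A : Matrix n m K) (B : Matrix n m' K) :
    (fromCols A B).rank ≤ A.rank + B.rank := by
  have hle : LinearMap.range (fromCols A B).mulVecLin ≤
      LinearMap.range A.mulVecLin ⊔ LinearMap.range B.mulVecLin := by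
    rintro _ ⟨v, rfl⟩
    have : (fromCols A B).mulVecLin v = A *ᵥ (v ∘ Sum.inl) + B *ᵥ (v ∘ Sum.inr) := by
      have := fromCols_mulVec_sumElim A B (v ∘ Sum.inl) (v ∘ Sum.inr)
      simpa [Sum.elim_comp_inl_inr] using this
    rw [this]
    exact Submodule.add_mem_sup ⟨_, rfl⟩ ⟨_, rfl⟩
  refine le_trans (Submodule.finrank_mono hle) ?_
  exact Submodule.finrank_add_le_finrank_add_finrank _ _

lemma rank_le_fromRows_left (A : Matrix n m K) (B : Matrix n' m K) :
    A.rank ≤ (fromRows A B).rank := by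
  rw [← rank_transpose A, ← rank_transpose (fromRows A B), transpose_fromRows]
  exact rank_le_fromColumns_left _ _

set_option synthInstance.maxHeartbeats 1000000 in
/-- rank of a block upper-triangular matrix is at least the sum of diagonal blocks' ranks. -/
lemma rank_add_rank_le_rank_fromBlocks (A : Matrix n m K) (B : Matrix n m' K)
    (D : Matrix n' m' K) :
    A.rank + D.rank ≤ (fromBlocks A B (0 : Matrix n' m K) D).rank := by
  classical
  set M := fromBlocks A B (0 : Matrix n' m K) D with hM
  set W := LinearMap.range M.mulVecLin with hW
  let π : ((n ⊕ n') → K) →ₗ[K] (n' → K) := LinearMap.funLeft K K Sum.inr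
  -- the map extending by zero on the second component
  let ι : (n → K) →ₗ[K] ((n ⊕ n') → K) :=
    { toFun := fun f => Sum.elim f 0
      map_add' := by intro f g; ext (i | i) <;> simp
      map_smul' := by intro c f; ext (i | i) <;> simp }
  have hι : Function.Injective ι := by
    intro f g h
    ext i
    have := congrFun h (Sum.inl i)
    simpa [ι] using this
  have key := LinearMap.finrank_range_add_finrank_ker (π.domRestrict W)
  -- range part
  have hrange : LinearMap.range (π.domRestrict W) = LinearMap.range D.mulVecLin := by
    rw [LinearMap.range_domRestrict]
    ext x
    constructor
    · rintro ⟨_, ⟨v, rfl⟩, rfl⟩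
      refine ⟨v ∘ Sum.inr, ?_⟩
      have : M.mulVecLin v = M *ᵥ v := rfl
      rw [hM] at this
      simp only [mulVecLin_apply, hM]
      ext i
      simp [π, fromBlocks_mulVec, LinearMap.funLeft]
    · rintro ⟨y, rfl⟩
      refine ⟨M *ᵥ Sum.elim 0 y, ⟨Sum.elim 0 y, rfl⟩, ?_⟩
      ext i
      simp [π, hM, fromBlocks_mulVec, LinearMap.funLeft]
  -- kernel part
  have hker : A.rank ≤ finrank K (LinearMap.ker (π.domRestrict W)) := by
    have hle : (LinearMap.range A.mulVecLin).map ι ≤ W ⊓ LinearMap.ker π := by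
      rintro _ ⟨_, ⟨x, rfl⟩, rfl⟩
      constructor
      · refine ⟨Sum.elim x 0, ?_⟩
        simp only [mulVecLin_apply, hM, fromBlocks_mulVec]
        ext (i | i) <;> simp [ι]
      · ext i
        simp [π, ι, LinearMap.funLeft]
    have h1 : A.rank = finrank K ((LinearMap.range A.mulVecLin).map ι) :=
      (Submodule.equivMapOfInjective ι hι _).finrank_eq
    have h2 : finrank K (LinearMap.ker (π.domRestrict W)) =
        finrank K ↥(W ⊓ LinearMap.ker π) := by
      have heq : LinearMap.ker (π.domRestrict W) =
          Submodule.comap W.subtype (W ⊓ LinearMap.ker π) := by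
        ext x
        simp [LinearMap.mem_ker, Submodule.mem_comap, x.2]
      rw [heq]
      exact (Submodule.comapSubtypeEquivOfLe (inf_le_left : (W ⊓ LinearMap.ker π) ≤ W)).finrank_eq
    rw [h1, h2]
    exact Submodule.finrank_mono hle
  have hD : finrank K (LinearMap.range (π.domRestrict W)) = D.rank := by
    rw [hrange]; rfl
  calc A.rank + D.rank ≤ finrank K (LinearMap.ker (π.domRestrict W)) +
        finrank K (LinearMap.range (π.domRestrict W)) := by
        rw [hD]; exact add_le_add hker le_rfl
    _ = finrank K W := by rw [add_comm]; exact key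
    _ = M.rank := rfl

end Aux

/-- Region 2 of Huang et al. lies inside the capacity region of the two-user linear
deterministic interference channel. -/
theorem region_subset_capacity_16 {K : Type*} [Field K] {n1 n2 m1 m2 : ℕ}
    (H11 : Matrix (Fin n1) (Fin m1) K) (H12 : Matrix (Fin n1) (Fin m2) K)
    (H21 : Matrix (Fin n2) (Fin m1) K) (H22 : Matrix (Fin n2) (Fin m2) K)
    (ha1 : (Matrix.fromCols H11 H12).rank = n1)
    (ha2 : (Matrix.fromCols H21 H22).rank = n2)
    (ha3 : (Matrix.fromRows H11 H21).rank = m1)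
    (ha4 : (Matrix.fromRows H12 H22).rank = m2)
    (R1 R2 : ℝ) (hR1 : 0 ≤ R1) (hR2 : 0 ≤ R2)
    (h1 : R1 ≤ (H11.rank : ℝ))
    (h2 : R2 ≤ min (n1 : ℝ) (n2 : ℝ) - (H21.rank : ℝ))
    (h3 : R1 + R2 ≤ (n1 : ℝ)) :
    R1 ≤ (H11.rank : ℝ) ∧ R2 ≤ (H22.rank : ℝ) ∧
    R1 + R2 ≤ (n1 : ℝ) + (m2 : ℝ) - (H12.rank : ℝ) ∧
    R1 + R2 ≤ (n2 : ℝ) + (m1 : ℝ) - (H21.rank : ℝ) ∧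
    R1 + R2 ≤ ((Matrix.fromBlocks H11 H12 H21 (0 : Matrix (Fin n2) (Fin m2) K)).rank : ℝ) +
      ((Matrix.fromBlocks H21 H22 (0 : Matrix (Fin n1) (Fin m1) K) H12).rank : ℝ) -
      (H12.rank : ℝ) - (H21.rank : ℝ) ∧
    2 * R1 + R2 ≤ (n1 : ℝ) + (m1 : ℝ) +
      ((Matrix.fromBlocks H21 H22 (0 : Matrix (Fin n1) (Fin m1) K) H12).rank : ℝ) -
      (H12.rank : ℝ) - (H21.rank : ℝ) ∧
    R1 + 2 * R2 ≤ (n2 : ℝ) + (m2 : ℝ) +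
      ((Matrix.fromBlocks H11 H12 H21 (0 : Matrix (Fin n2) (Fin m2) K)).rank : ℝ) -
      (H12.rank : ℝ) - (H21.rank : ℝ) := by
  -- basic rank facts
  have e11m : H11.rank ≤ m1 := H11.rank_le_width
  have e12m : H12.rank ≤ m2 := H12.rank_le_width
  have e12n : H12.rank ≤ n1 := H12.rank_le_height
  have e21m : H21.rank ≤ m1 := H21.rank_le_width
  -- n2 ≤ rank H21 + rank H22
  have hsub : (n2 : ℕ) ≤ H21.rank + H22.rank := by
    have := rank_fromColumns_le H21 H22
    rwa [ha2] at this
  -- rank B ≥ n1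
  have hB : (n1 : ℕ) ≤ (Matrix.fromBlocks H11 H12 H21 (0 : Matrix (Fin n2) (Fin m2) K)).rank := by
    have := rank_le_fromRows_left (Matrix.fromCols H11 H12)
      (Matrix.fromCols H21 (0 : Matrix (Fin n2) (Fin m2) K))
    rwa [fromRows_fromCols_eq_fromBlocks, ha1] at this
  -- rank C ≥ rank H21 + rank H12
  have hC : H21.rank + H12.rank ≤
      (Matrix.fromBlocks H21 H22 (0 : Matrix (Fin n1) (Fin m1) K) H12).rank :=
    rank_add_rank_le_rank_fromBlocks H21 H22 H12
  -- cast everything to ℝ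
  have c11m : (H11.rank : ℝ) ≤ m1 := by exact_mod_cast e11m
  have c12m : (H12.rank : ℝ) ≤ m2 := by exact_mod_cast e12m
  have c12n : (H12.rank : ℝ) ≤ n1 := by exact_mod_cast e12n
  have c21m : (H21.rank : ℝ) ≤ m1 := by exact_mod_cast e21m
  have csub : (n2 : ℝ) ≤ (H21.rank : ℝ) + (H22.rank : ℝ) := by exact_mod_cast hsub
  have cB : (n1 : ℝ) ≤
      ((Matrix.fromBlocks H11 H12 H21 (0 : Matrix (Fin n2) (Fin m2) K)).rank : ℝ) := by
    exact_mod_cast hB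
  have cC : (H21.rank : ℝ) + (H12.rank : ℝ) ≤
      ((Matrix.fromBlocks H21 H22 (0 : Matrix (Fin n1) (Fin m1) K) H12).rank : ℝ) := by
    exact_mod_cast hC
  have hmin2 : min (n1 : ℝ) (n2 : ℝ) ≤ (n2 : ℝ) := min_le_right _ _
  have hmin1 : min (n1 : ℝ) (n2 : ℝ) ≤ (n1 : ℝ) := min_le_left _ _
  refine ⟨h1, ?_, ?_, ?_, ?_, ?_, ?_⟩
  · linarith
  · linarith
  · linarith
  · linarith
  · linarith
  · linarith
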